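/- Let A, B be n×n positive definite complex matrices and v ∈ [0,1]. Suppose 0 < m·I ≤ A⁻¹, B⁻¹ ≤ M·I for scalars 0 < m ≤ M, and let K(h) = (h+1)²/(4h) with h = M/m. Then the weighted geometric mean satisfies A ♯_v B ≤ K(h) · (A !_v B), where A !_v B = ((1−v)A⁻¹ + vB⁻¹)⁻¹ is the weighted harmonic mean. (This is the α = 0 case of the main theorem with the identity map.) -/

import Mathlib

open Matrix
open scoped ComplexOrder

noncomputable section
namespace Paper

variable {n : ℕ}

/-- Real part `(A + Aᴴ)/2`. -/
def re (A : Matrix (Fin n) (Fin n) ℂ) : Matrix (Fin n) (Fin n) ℂ := (2⁻¹ : ℂ) • (A + Aᴴ)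

/-- Imaginary part `(A - Aᴴ)/(2i)`. -/
def im (A : Matrix (Fin n) (Fin n) ℂ) : Matrix (Fin n) (Fin n) ℂ :=
  (2 * Complex.I)⁻¹ • (A - Aᴴ)

/-- The sector `S_α`. -/
def sector (α : ℝ) : Set ℂ := {z | 0 < z.re ∧ |z.im| ≤ z.re * Real.tan α}

/-- Numerical range of a matrix. -/
def numericalRange (A : Matrix (Fin n) (Fin n) ℂ) : Set ℂ :=
  {z | ∃ x : Fin n → ℂ, star x ⬝ᵥ x = 1 ∧ z = star x ⬝ᵥ (A *ᵥ x)}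

/-- Loewner order: `X ≤ Y` iff `Y - X` is positive semidefinite. -/
def loewnerLE (X Y : Matrix (Fin n) (Fin n) ℂ) : Prop := (Y - X).PosSemidef

lemma re_isHermitian (A : Matrix (Fin n) (Fin n) ℂ) : (re A).IsHermitian := by
  show ((2⁻¹ : ℂ) • (A + Aᴴ))ᴴ = (2⁻¹ : ℂ) • (A + Aᴴ)
  rw [Matrix.conjTranspose_smul, Matrix.conjTranspose_add,
    Matrix.conjTranspose_conjTranspose, add_comm Aᴴ A]
  simp

/-- The `j`-th largest element of `v` (descending sort). -/
def nthLargest (v : Fin n → ℝ) (j : Fin n) : ℝ :=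
  ((List.ofFn v).mergeSort (fun a b => decide (b ≤ a))).get
    (Fin.cast (by simp) j)

/-- `j`-th largest eigenvalue of a Hermitian matrix. -/
def eigDesc {A : Matrix (Fin n) (Fin n) ℂ} (hA : A.IsHermitian) (j : Fin n) : ℝ :=
  nthLargest hA.eigenvalues j

/-- `j`-th largest singular value. -/
def singular (A : Matrix (Fin n) (Fin n) ℂ) (j : Fin n) : ℝ :=
  nthLargest (fun i => Real.sqrt ((Matrix.isHermitian_conjTranspose_mul_self A).eigenvalues i)) j

/-- Weighted geometric mean of positive definite matrices. -/
def sharp (v : ℝ) {A B : Matrix (Fin n) (Fin n) ℂ} (hA : A.PosDef) (hB : B.PosDef) :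
    Matrix (Fin n) (Fin n) ℂ :=
  hA.posSemidef.1.cfc Real.sqrt *
    (Matrix.isHermitian_mul_mul_conjTranspose (hA.posSemidef.1.cfc Real.sqrt)⁻¹ hB.1).cfc
      (fun x => Real.rpow x v) * hA.posSemidef.1.cfc Real.sqrt

/-- Weighted arithmetic mean. -/
def arith (v : ℝ) (A B : Matrix (Fin n) (Fin n) ℂ) : Matrix (Fin n) (Fin n) ℂ :=
  (1 - v) • A + v • B

/-- Weighted harmonic mean. -/
def harm (v : ℝ) (A B : Matrix (Fin n) (Fin n) ℂ) : Matrix (Fin n) (Fin n) ℂ :=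
  ((1 - v) • A⁻¹ + v • B⁻¹)⁻¹

/-- Kantorovich constant. -/
def K (h : ℝ) : ℝ := (h + 1) ^ 2 / (4 * h)


/-! ### Auxiliary lemmas for the Loewner order and the Hermitian functional calculus -/

section Aux

lemma smul_posSemidef {c : ℝ} (hc : 0 ≤ c) {P : Matrix (Fin n) (Fin n) ℂ}
    (hP : P.PosSemidef) : (c • P).PosSemidef := by
  refine .of_dotProduct_mulVec_nonneg ?_ fun x => ?_
  · show (c • P)ᴴ = c • P
    rw [Matrix.conjTranspose_smul, star_trivial, hP.1.eq]
  · rw [Matrix.smul_mulVec, dotProduct_smul, Complex.real_smul]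
    exact mul_nonneg (by exact_mod_cast hc) (hP.dotProduct_mulVec_nonneg x)

lemma smul_posDef {c : ℝ} (hc : 0 < c) {P : Matrix (Fin n) (Fin n) ℂ}
    (hP : P.PosDef) : (c • P).PosDef := by
  refine .of_dotProduct_mulVec_pos ?_ fun ⦃x⦄ hx => ?_
  · show (c • P)ᴴ = c • P
    rw [Matrix.conjTranspose_smul, star_trivial, hP.1.eq]
  · rw [Matrix.smul_mulVec, dotProduct_smul, Complex.real_smul]
    exact mul_pos (by exact_mod_cast hc) (hP.dotProduct_mulVec_pos hx)

lemma loewnerLE_trans {X Y Z : Matrix (Fin n) (Fin n) ℂ} (h1 : loewnerLE X Y)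
    (h2 : loewnerLE Y Z) : loewnerLE X Z := by
  have := h2.add h1
  simpa [loewnerLE, sub_add_sub_cancel] using this

lemma loewnerLE_conj {X Y : Matrix (Fin n) (Fin n) ℂ} (h : loewnerLE X Y)
    (C : Matrix (Fin n) (Fin n) ℂ) : loewnerLE (C * X * Cᴴ) (C * Y * Cᴴ) := by
  have := h.mul_mul_conjTranspose_same C
  unfold loewnerLE at *
  rwa [Matrix.mul_sub, Matrix.sub_mul] at this

lemma loewnerLE_combo {X₁ Y₁ X₂ Y₂ : Matrix (Fin n) (Fin n) ℂ} {a b : ℝ}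
    (ha : 0 ≤ a) (hb : 0 ≤ b) (h1 : loewnerLE X₁ Y₁) (h2 : loewnerLE X₂ Y₂) :
    loewnerLE (a • X₁ + b • X₂) (a • Y₁ + b • Y₂) := by
  have := (smul_posSemidef ha h1).add (smul_posSemidef hb h2)
  unfold loewnerLE at *
  convert this using 1
  module

section cfc

variable {X : Matrix (Fin n) (Fin n) ℂ} (hX : X.IsHermitian)

lemma cfc_loewnerLE {f g : ℝ → ℝ}
    (h : ∀ i, f (hX.eigenvalues i) ≤ g (hX.eigenvalues i)) :
    loewnerLE (hX.cfc f) (hX.cfc g) := by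
  unfold loewnerLE
  have key : hX.cfc g - hX.cfc f =
      (hX.eigenvectorUnitary : Matrix (Fin n) (Fin n) ℂ) *
        Matrix.diagonal (fun i => ((g (hX.eigenvalues i) - f (hX.eigenvalues i) : ℝ) : ℂ)) *
        (hX.eigenvectorUnitary : Matrix (Fin n) (Fin n) ℂ)ᴴ := by
    rw [Matrix.IsHermitian.cfc, Matrix.IsHermitian.cfc, ← Matrix.star_eq_conjTranspose]
    simp only [Unitary.conjStarAlgAut_apply]
    rw [← Matrix.sub_mul, ← Matrix.mul_sub, Matrix.diagonal_sub]
    congr 2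
    funext i
    simp [Complex.ofReal_sub]
  rw [key]
  exact (Matrix.posSemidef_diagonal_iff.mpr fun i => by
    exact_mod_cast sub_nonneg.mpr (h i)).mul_mul_conjTranspose_same _

lemma cfc_congr {f g : ℝ → ℝ} (h : ∀ i, f (hX.eigenvalues i) = g (hX.eigenvalues i)) :
    hX.cfc f = hX.cfc g := by
  rw [Matrix.IsHermitian.cfc, Matrix.IsHermitian.cfc]
  have : RCLike.ofReal ∘ f ∘ hX.eigenvalues = (RCLike.ofReal ∘ g ∘ hX.eigenvalues : Fin n → ℂ) := by
    funext i
    exact congrArg _ (h i)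
  rw [this]

lemma cfc_mul' (f g : ℝ → ℝ) :
    hX.cfc f * hX.cfc g = hX.cfc (fun x => f x * g x) := by
  rw [Matrix.IsHermitian.cfc, Matrix.IsHermitian.cfc, Matrix.IsHermitian.cfc]
  simp only [Unitary.conjStarAlgAut_apply]
  have hU : (star (hX.eigenvectorUnitary : Matrix (Fin n) (Fin n) ℂ)) *
      (hX.eigenvectorUnitary : Matrix (Fin n) (Fin n) ℂ) = 1 :=
    Matrix.mem_unitaryGroup_iff'.mp (hX.eigenvectorUnitary).2
  have hdiag : Matrix.diagonal (RCLike.ofReal ∘ f ∘ hX.eigenvalues : Fin n → ℂ) *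
      Matrix.diagonal (RCLike.ofReal ∘ g ∘ hX.eigenvalues) =
      Matrix.diagonal (RCLike.ofReal ∘ (fun x => f x * g x) ∘ hX.eigenvalues) := by
    rw [Matrix.diagonal_mul_diagonal]
    have : (fun i => (RCLike.ofReal ∘ f ∘ hX.eigenvalues) i *
        (RCLike.ofReal ∘ g ∘ hX.eigenvalues) i) =
        (RCLike.ofReal ∘ (fun x => f x * g x) ∘ hX.eigenvalues : Fin n → ℂ) := by
      funext i
      simp
    rw [this]
  simp only [Matrix.mul_assoc]
  rw [← Matrix.mul_assoc (star (hX.eigenvectorUnitary : Matrix (Fin n) (Fin n) ℂ))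
    (hX.eigenvectorUnitary : Matrix (Fin n) (Fin n) ℂ), hU, Matrix.one_mul,
    ← Matrix.mul_assoc (Matrix.diagonal _) (Matrix.diagonal _), hdiag]

lemma cfc_id' : hX.cfc (fun x => x) = X := by
  rw [Matrix.IsHermitian.cfc]
  exact hX.spectral_theorem.symm

lemma cfc_affine (a b : ℝ) :
    hX.cfc (fun x => a + b * x) = a • (1 : Matrix (Fin n) (Fin n) ℂ) + b • X := by
  rw [Matrix.IsHermitian.cfc]
  have hd : Matrix.diagonal (RCLike.ofReal ∘ (fun x => a + b * x) ∘ hX.eigenvalues : Fin n → ℂ) =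
      a • (1 : Matrix (Fin n) (Fin n) ℂ) +
        b • Matrix.diagonal (RCLike.ofReal ∘ hX.eigenvalues) := by
    ext i j
    rcases eq_or_ne i j with rfl | hij
    · simp only [Matrix.diagonal_apply_eq, Matrix.add_apply, Matrix.smul_apply,
        Matrix.one_apply_eq, Function.comp_apply, Complex.real_smul, RCLike.ofReal_alg]
      push_cast
      ring
    · simp [Matrix.diagonal_apply_ne _ hij, Matrix.one_apply_ne hij]
  have hU : (hX.eigenvectorUnitary : Matrix (Fin n) (Fin n) ℂ) *
      star (hX.eigenvectorUnitary : Matrix (Fin n) (Fin n) ℂ) = 1 :=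
    Matrix.mem_unitaryGroup_iff.mp (hX.eigenvectorUnitary).2
  simp only [Unitary.conjStarAlgAut_apply]
  rw [hd, Matrix.mul_add, Matrix.add_mul, Matrix.mul_smul, Matrix.smul_mul,
    Matrix.mul_smul, Matrix.smul_mul, Matrix.mul_one, hU]
  congr 1
  rw [← Unitary.conjStarAlgAut_apply (S := ℂ), ← hX.spectral_theorem]

lemma cfc_smul_fun (c : ℝ) (f : ℝ → ℝ) :
    hX.cfc (fun x => c * f x) = c • hX.cfc f := by
  rw [Matrix.IsHermitian.cfc, Matrix.IsHermitian.cfc]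
  have hd : Matrix.diagonal (RCLike.ofReal ∘ (fun x => c * f x) ∘ hX.eigenvalues : Fin n → ℂ) =
      c • Matrix.diagonal (RCLike.ofReal ∘ f ∘ hX.eigenvalues) := by
    ext i j
    rcases eq_or_ne i j with rfl | hij
    · simp [Matrix.diagonal_apply_eq, Complex.real_smul]
    · simp [Matrix.diagonal_apply_ne _ hij]
  simp only [Unitary.conjStarAlgAut_apply]
  rw [hd, Matrix.mul_smul, Matrix.smul_mul]

lemma cfc_inv' (h0 : ∀ i, hX.eigenvalues i ≠ 0) :
    hX.cfc (fun x => x⁻¹) = X⁻¹ := by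
  have h1 : hX.cfc (fun x => x⁻¹) * hX.cfc (fun x => x) = 1 := by
    rw [cfc_mul']
    have : hX.cfc (fun x => x⁻¹ * x) = hX.cfc (fun x => 1 + 0 * x) :=
      cfc_congr hX fun i => by rw [inv_mul_cancel₀ (h0 i)]; ring
    rw [this, cfc_affine]
    simp
  rw [cfc_id'] at h1
  exact (Matrix.inv_eq_left_inv h1).symm

lemma eigenvalues_ge_of_loewnerLE {m : ℝ}
    (h : loewnerLE (m • (1 : Matrix (Fin n) (Fin n) ℂ)) X) (i : Fin n) :
    m ≤ hX.eigenvalues i := by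
  have hv : dotProduct (star ⇑(hX.eigenvectorBasis i)) ⇑(hX.eigenvectorBasis i) = 1 := by
    have h2 : (inner ℂ (hX.eigenvectorBasis i) (hX.eigenvectorBasis i) : ℂ) = 1 := by
      rw [inner_self_eq_norm_sq_to_K, hX.eigenvectorBasis.orthonormal.1 i]
      norm_num
    rw [EuclideanSpace.inner_eq_star_dotProduct] at h2
    rw [dotProduct_comm]
    exact h2
  have hq := h.dotProduct_mulVec_nonneg ⇑(hX.eigenvectorBasis i)
  rw [Matrix.sub_mulVec, dotProduct_sub, Matrix.smul_mulVec,
    Matrix.one_mulVec, dotProduct_smul, hX.mulVec_eigenvectorBasis,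
    dotProduct_smul, hv] at hq
  rw [Complex.real_smul, Complex.real_smul, mul_one, mul_one, sub_nonneg] at hq
  exact_mod_cast hq

lemma eigenvalues_le_of_loewnerLE {M : ℝ}
    (h : loewnerLE X (M • (1 : Matrix (Fin n) (Fin n) ℂ))) (i : Fin n) :
    hX.eigenvalues i ≤ M := by
  have hv : dotProduct (star ⇑(hX.eigenvectorBasis i)) ⇑(hX.eigenvectorBasis i) = 1 := by
    have h2 : (inner ℂ (hX.eigenvectorBasis i) (hX.eigenvectorBasis i) : ℂ) = 1 := by
      rw [inner_self_eq_norm_sq_to_K, hX.eigenvectorBasis.orthonormal.1 i]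
      norm_num
    rw [EuclideanSpace.inner_eq_star_dotProduct] at h2
    rw [dotProduct_comm]
    exact h2
  have hq := h.dotProduct_mulVec_nonneg ⇑(hX.eigenvectorBasis i)
  rw [Matrix.sub_mulVec, dotProduct_sub, Matrix.smul_mulVec,
    Matrix.one_mulVec, dotProduct_smul, hX.mulVec_eigenvectorBasis,
    dotProduct_smul, hv] at hq
  rw [Complex.real_smul, Complex.real_smul, mul_one, mul_one, sub_nonneg] at hq
  exact_mod_cast hq

end cfc

end Aux

/-- `A ♯ᵥ B ≤ K(h) (A !ᵥ B)`. -/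
theorem sharp_le_kantorovich_smul_harm (A B : Matrix (Fin n) (Fin n) ℂ) (hA : A.PosDef) (hB : B.PosDef)
    (v : ℝ) (hv : v ∈ Set.Icc 0 1) (m M : ℝ) (hm : 0 < m) (hmM : m ≤ M)
    (hA1 : loewnerLE (m • (1 : Matrix (Fin n) (Fin n) ℂ)) A⁻¹) (hA2 : loewnerLE A⁻¹ (M • 1))
    (hB1 : loewnerLE (m • (1 : Matrix (Fin n) (Fin n) ℂ)) B⁻¹) (hB2 : loewnerLE B⁻¹ (M • 1)) :
    loewnerLE (sharp v hA hB) (K (M / m) • harm v A B) := by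
  obtain ⟨hv0, hv1⟩ := hv
  have hM : 0 < M := lt_of_lt_of_le hm hmM
  set T := hA.posSemidef.1.cfc Real.sqrt with hTdef
  have hT : T.PosSemidef := by
    have h0 := cfc_loewnerLE hA.posSemidef.1 (f := fun x => 0 + 0 * x) (g := Real.sqrt)
      (fun i => by simp only [zero_mul, zero_add]; exact Real.sqrt_nonneg _)
    rw [cfc_affine] at h0
    unfold loewnerLE at h0
    simpa using h0
  have hTT : T * T = A := by
    rw [hTdef, cfc_mul', cfc_congr _ (g := fun x => x)
      (fun i => Real.mul_self_sqrt (hA.posSemidef.eigenvalues_nonneg i)), cfc_id']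
  have hdet : IsUnit T.det := by
    have h2 : T.det * T.det = A.det := by rw [← Matrix.det_mul, hTT]
    have h3 : IsUnit A.det := (Matrix.isUnit_iff_isUnit_det A).mp hA.isUnit
    exact isUnit_of_mul_isUnit_left (h2 ▸ h3)
  have hTinv : (T⁻¹)ᴴ = T⁻¹ := by rw [Matrix.conjTranspose_nonsing_inv, hT.1.eq]
  set X := T⁻¹ * B * (T⁻¹)ᴴ with hXdef
  have hX : X.IsHermitian := Matrix.isHermitian_mul_mul_conjTranspose _ hB.1
  have hXpsd : X.PosSemidef := hB.posSemidef.mul_mul_conjTranspose_same _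
  have hTXT : T * X * T = B := by
    rw [hXdef, hTinv, ← Matrix.mul_assoc, ← Matrix.mul_assoc, Matrix.mul_nonsing_inv _ hdet,
      Matrix.one_mul, Matrix.mul_assoc, Matrix.nonsing_inv_mul _ hdet, Matrix.mul_one]
  -- Step 1 : sharp ≤ arith
  have step1 : loewnerLE (sharp v hA hB) ((1 - v) • A + v • B) := by
    have h1 : loewnerLE (hX.cfc (fun x => Real.rpow x v))
        (hX.cfc (fun x => (1 - v) + v * x)) := by
      apply cfc_loewnerLE
      intro i
      have hx : 0 ≤ hX.eigenvalues i := hXpsd.eigenvalues_nonneg i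
      have h2 := Real.geom_mean_le_arith_mean2_weighted (sub_nonneg.mpr hv1) hv0
        zero_le_one hx (by ring)
      simpa using h2
    have h2 := loewnerLE_conj h1 T
    rw [hT.1.eq] at h2
    have e2 : T * hX.cfc (fun x => (1 - v) + v * x) * T = (1 - v) • A + v • B := by
      rw [cfc_affine]
      simp only [Matrix.mul_add, Matrix.add_mul, Matrix.mul_smul, Matrix.smul_mul,
        Matrix.mul_one]
      rw [hTT, hTXT]
    rw [e2] at h2
    exact h2
  -- harmonic mean setup
  have hCpd : (A⁻¹).PosDef := hA.inv
  have hDpd : (B⁻¹).PosDef := hB.inv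
  set E := (1 - v) • A⁻¹ + v • B⁻¹ with hEdef
  have hE1 : loewnerLE (m • (1 : Matrix (Fin n) (Fin n) ℂ)) E := by
    show (E - m • (1 : Matrix (Fin n) (Fin n) ℂ)).PosSemidef
    have h1 := (smul_posSemidef (sub_nonneg.mpr hv1) hA1).add (smul_posSemidef hv0 hB1)
    convert h1 using 1
    rw [hEdef]
    show _ = (1 - v) • (A⁻¹ - m • (1 : Matrix (Fin n) (Fin n) ℂ)) +
      v • (B⁻¹ - m • (1 : Matrix (Fin n) (Fin n) ℂ))
    module
  have hE2 : loewnerLE E (M • (1 : Matrix (Fin n) (Fin n) ℂ)) := by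
    show ((M • (1 : Matrix (Fin n) (Fin n) ℂ)) - E).PosSemidef
    have h1 := (smul_posSemidef (sub_nonneg.mpr hv1) hA2).add (smul_posSemidef hv0 hB2)
    convert h1 using 1
    rw [hEdef]
    show _ = (1 - v) • ((M • (1 : Matrix (Fin n) (Fin n) ℂ)) - A⁻¹) +
      v • ((M • (1 : Matrix (Fin n) (Fin n) ℂ)) - B⁻¹)
    module
  have hEpd : E.PosDef := by
    have h1 : ((E - m • (1 : Matrix (Fin n) (Fin n) ℂ)) +
        m • (1 : Matrix (Fin n) (Fin n) ℂ)).PosDef :=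
      Matrix.PosDef.posSemidef_add hE1 (smul_posDef hm Matrix.PosDef.one)
    simpa using h1
  have hEH : E.IsHermitian := hEpd.1
  have hKval : K (M / m) = (M + m) ^ 2 / (4 * (M * m)) := by
    unfold K
    field_simp
  -- Step 2 : arith ≤ secant
  have secant : ∀ (C : Matrix (Fin n) (Fin n) ℂ) (hC : C.PosDef)
      (h1 : loewnerLE (m • (1 : Matrix (Fin n) (Fin n) ℂ)) C⁻¹)
      (h2 : loewnerLE C⁻¹ (M • (1 : Matrix (Fin n) (Fin n) ℂ))),
      loewnerLE C ((M * m)⁻¹ • ((M + m) • (1 : Matrix (Fin n) (Fin n) ℂ) - C⁻¹)) := by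
    intro C hC h1 h2
    have hCiH : (C⁻¹).IsHermitian := hC.inv.1
    have hCeq : hCiH.cfc (fun x => x⁻¹) = C := by
      rw [cfc_inv' hCiH (fun i =>
        (lt_of_lt_of_le hm (eigenvalues_ge_of_loewnerLE hCiH h1 i)).ne'),
        Matrix.nonsing_inv_nonsing_inv _ ((Matrix.isUnit_iff_isUnit_det C).mp hC.isUnit)]
    have hReq : hCiH.cfc (fun x => (M * m)⁻¹ * ((M + m) + (-1) * x)) =
        (M * m)⁻¹ • ((M + m) • (1 : Matrix (Fin n) (Fin n) ℂ) - C⁻¹) := by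
      rw [cfc_smul_fun, cfc_affine]
      congr 1
      module
    have main : loewnerLE (hCiH.cfc fun x => x⁻¹)
        (hCiH.cfc fun x => (M * m)⁻¹ * ((M + m) + (-1) * x)) := by
      apply cfc_loewnerLE
      intro i
      have hb1 := eigenvalues_ge_of_loewnerLE hCiH h1 i
      have hb2 := eigenvalues_le_of_loewnerLE hCiH h2 i
      set x := hCiH.eigenvalues i
      have hx : 0 < x := lt_of_lt_of_le hm hb1
      rw [show (M * m)⁻¹ * ((M + m) + (-1) * x) = ((M + m) + (-1) * x) / (M * m) by ring,
        inv_eq_one_div, div_le_div_iff₀ hx (mul_pos hM hm)]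
      nlinarith [mul_nonneg (sub_nonneg.mpr hb1) (sub_nonneg.mpr hb2)]
    rwa [hCeq, hReq] at main
  have step2 : loewnerLE ((1 - v) • A + v • B)
      ((M * m)⁻¹ • ((M + m) • (1 : Matrix (Fin n) (Fin n) ℂ) - E)) := by
    have h := loewnerLE_combo (sub_nonneg.mpr hv1) hv0
      (secant A hA hA1 hA2) (secant B hB hB1 hB2)
    have e : (1 - v) • ((M * m)⁻¹ • ((M + m) • (1 : Matrix (Fin n) (Fin n) ℂ) - A⁻¹)) +
        v • ((M * m)⁻¹ • ((M + m) • (1 : Matrix (Fin n) (Fin n) ℂ) - B⁻¹)) =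
        (M * m)⁻¹ • ((M + m) • (1 : Matrix (Fin n) (Fin n) ℂ) - E) := by
      rw [hEdef]
      module
    rw [e] at h
    exact h
  -- Step 3 : secant ≤ K • E⁻¹
  have hEeig_lo := fun i => eigenvalues_ge_of_loewnerLE hEH hE1 i
  have hEeig_hi := fun i => eigenvalues_le_of_loewnerLE hEH hE2 i
  have hEinv : hEH.cfc (fun x => x⁻¹) = E⁻¹ :=
    cfc_inv' hEH (fun i => (lt_of_lt_of_le hm (hEeig_lo i)).ne')
  have step3 : loewnerLE ((M * m)⁻¹ • ((M + m) • (1 : Matrix (Fin n) (Fin n) ℂ) - E))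
      (K (M / m) • E⁻¹) := by
    have hLeq : hEH.cfc (fun x => (M * m)⁻¹ * ((M + m) + (-1) * x)) =
        (M * m)⁻¹ • ((M + m) • (1 : Matrix (Fin n) (Fin n) ℂ) - E) := by
      rw [cfc_smul_fun, cfc_affine]
      congr 1
      module
    have hReq : hEH.cfc (fun x => K (M / m) * x⁻¹) = K (M / m) • E⁻¹ := by
      rw [cfc_smul_fun, hEinv]
    rw [← hLeq, ← hReq]
    apply cfc_loewnerLE
    intro i
    have hb1 := hEeig_lo i
    have hb2 := hEeig_hi i
    set x := hEH.eigenvalues i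
    have hx : 0 < x := lt_of_lt_of_le hm hb1
    rw [hKval,
      show (M * m)⁻¹ * ((M + m) + (-1) * x) = ((M + m) + (-1) * x) / (M * m) by ring,
      show (M + m) ^ 2 / (4 * (M * m)) * x⁻¹ = (M + m) ^ 2 / (4 * (M * m) * x) by
        rw [← div_eq_mul_inv, div_div],
      div_le_div_iff₀ (mul_pos hM hm) (by positivity)]
    nlinarith [mul_nonneg (sq_nonneg (M + m - 2 * x)) (le_of_lt (mul_pos hM hm))]
  exact loewnerLE_trans step1 (loewnerLE_trans step2 step3)

end Paper
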